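/- arXiv:2406.08269 — 9 statements merged into one kernel-verified Lean document; each statement's English description precedes it below -/
import Mathlib

section
/- Let L : Σ* → Δ(Σ_$) be a language model. For all u, v ∈ Σ*, u ≡ v if and only if the following two conditions hold: (i) P(u) > 0 if and only if P(v) > 0, and (ii) for all w ∈ Σ*, if P(uw) > 0 and P(vw) > 0 then L(uw) = L(vw). -/
private lemma P_nonneg {α : Type} [Fintype α]
    (L : List α → Option α → ℝ)
    (hL : ∀ u, (∀ σ, 0 ≤ L u σ) ∧ (∑ σ : Option α, L u σ) = 1)
    (P : List α → ℝ) (hP0 : P [] = 1)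
    (hPs : ∀ u σ, P (u ++ [σ]) = P u * L u (some σ)) :
    ∀ w, 0 ≤ P w := by
  intro w
  induction w using List.reverseRecOn with
  | nil => rw [hP0]; norm_num
  | append_singleton w σ ih => rw [hPs]; exact mul_nonneg ih ((hL w).1 _)

private lemma P_zero {α : Type} [Fintype α]
    (L : List α → Option α → ℝ)
    (P : List α → ℝ)
    (hPs : ∀ u σ, P (u ++ [σ]) = P u * L u (some σ)) (u : List α)
    (hu : P u = 0) : ∀ w, P (u ++ w) = 0 := by
  intro w
  induction w using List.reverseRecOn with
  | nil => simpa using hu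
  | append_singleton w σ ih =>
    rw [← List.append_assoc, hPs, ih, zero_mul]

/-- Let `L : Σ* → Δ(Σ_$)` be a language model. For all `u v ∈ Σ*`,
`u ≡ v` iff (i) `P(u) > 0 ↔ P(v) > 0` and (ii) for all `w`, if `P(uw) > 0` and
`P(vw) > 0` then `L(uw) = L(vw)`.
Here `Σ_$` is modeled as `Option α` with `none` the termination symbol `$`, and
`P` is the prefix probability determined by `P(λ) = 1`, `P(uσ) = P(u)·L(u)(σ)`. -/
theorem stmt_0 (α : Type) [Fintype α] [Nonempty α]
    (L : List α → Option α → ℝ)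
    (hL : ∀ u, (∀ σ, 0 ≤ L u σ) ∧ (∑ σ : Option α, L u σ) = 1)
    (P : List α → ℝ)
    (hP0 : P [] = 1)
    (hPs : ∀ u σ, P (u ++ [σ]) = P u * L u (some σ))
    (u v : List α) :
    ((P u = 0 ∧ P v = 0) ∨
      (0 < P u ∧ 0 < P v ∧ ∀ w : List α, P (u ++ w) / P u = P (v ++ w) / P v)) ↔
    ((0 < P u ↔ 0 < P v) ∧
      ∀ w : List α, 0 < P (u ++ w) → 0 < P (v ++ w) → L (u ++ w) = L (v ++ w)) := by
  have hnn := P_nonneg L hL P hP0 hPs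
  constructor
  · rintro (⟨hu, hv⟩ | ⟨hu, hv, hr⟩)
    · constructor
      · simp [hu, hv]
      · intro w hw _
        exact absurd hw (by rw [P_zero L P hPs u hu w]; exact lt_irrefl 0)
    · refine ⟨by simp [hu, hv], ?_⟩
      intro w hwu hwv
      funext σ
      have key : ∀ a : α, L (u ++ w) (some a) = L (v ++ w) (some a) := by
        intro a
        have h1 := hr (w ++ [a])
        have h2 := hr w
        rw [← List.append_assoc, ← List.append_assoc, hPs, hPs] at h1
        rw [mul_div_right_comm, mul_div_right_comm, ← h2] at h1
        exact mul_left_cancel₀ (ne_of_gt (div_pos hwu hu)) h1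
      cases σ with
      | some a => exact key a
      | none =>
        have s1 := (hL (u ++ w)).2
        have s2 := (hL (v ++ w)).2
        rw [Fintype.sum_option] at s1 s2
        have : ∑ a : α, L (u ++ w) (some a) = ∑ a : α, L (v ++ w) (some a) :=
          Finset.sum_congr rfl (fun a _ => key a)
        linarith
  · rintro ⟨hiff, hLeq⟩
    by_cases hu : 0 < P u
    · have hv := hiff.mp hu
      right
      refine ⟨hu, hv, ?_⟩
      intro w
      induction w using List.reverseRecOn with
      | nil => simp [div_self (ne_of_gt hu), div_self (ne_of_gt hv)]
      | append_singleton w σ ih =>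
        rw [← List.append_assoc, ← List.append_assoc, hPs, hPs]
        by_cases hwu : 0 < P (u ++ w)
        · have hwv : 0 < P (v ++ w) := by
            by_contra h
            have h0 : P (v ++ w) = 0 := le_antisymm (not_lt.mp h) (hnn _)
            have hd := div_pos hwu hu
            rw [ih, h0, zero_div] at hd
            exact lt_irrefl 0 hd
          have hle := hLeq w hwu hwv
          rw [mul_div_right_comm, mul_div_right_comm, ih, hle]
        · have hwu0 : P (u ++ w) = 0 := le_antisymm (not_lt.mp hwu) (hnn _)
          have hwv0 : P (v ++ w) = 0 := by
            have := ih
            rw [hwu0, zero_div] at this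
            have h2 : P (v ++ w) / P v = 0 := this.symm
            rcases div_eq_zero_iff.mp h2 with h | h
            · exact h
            · exact absurd h (ne_of_gt hv)
          rw [hwu0, hwv0, zero_mul, zero_mul]
          simp
    · left
      have hu0 : P u = 0 := le_antisymm (not_lt.mp hu) (hnn _)
      have hv0 : P v = 0 := le_antisymm (not_lt.mp (fun h => hu (hiff.mpr h))) (hnn _)
      exact ⟨hu0, hv0⟩
end

section
/- Let L : Σ* → Δ(Σ_$) be a language model and E an equivalence relation on Δ(Σ_$) such that supp(ρ) = supp(ρ') whenever ρ =_E ρ'. Suppose u, v ∈ Σ* satisfy P(u) > 0, P(v) > 0, and for all w ∈ Σ*, if P(uw) > 0 and P(vw) > 0 then L(uw) =_E L(vw). Then for every w ∈ Σ*, P(uw) > 0 if and only if P(vw) > 0. -/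
/-- Let `L` be a language model and `E` an equivalence relation on
`Δ(Σ_$)` preserving supports. If `P(u) > 0`, `P(v) > 0` and for all `w`,
`P(uw) > 0 → P(vw) > 0 → L(uw) =_E L(vw)`, then for every `w`,
`P(uw) > 0 ↔ P(vw) > 0`. (`Σ_$ = Option α`, `none` = `$`.) -/
theorem stmt_3 (α : Type) [Fintype α] [Nonempty α]
    (L : List α → Option α → ℝ)
    (hL : ∀ u, (∀ σ, 0 ≤ L u σ) ∧ (∑ σ : Option α, L u σ) = 1)
    (P : List α → ℝ)
    (hP0 : P [] = 1)
    (hPs : ∀ u σ, P (u ++ [σ]) = P u * L u (some σ))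
    (E : (Option α → ℝ) → (Option α → ℝ) → Prop)
    (hE : Equivalence E)
    (hsupp : ∀ ρ ρ', E ρ ρ' → {σ : Option α | 0 < ρ σ} = {σ : Option α | 0 < ρ' σ})
    (u v : List α)
    (hu : 0 < P u) (hv : 0 < P v)
    (h : ∀ w : List α, 0 < P (u ++ w) → 0 < P (v ++ w) → E (L (u ++ w)) (L (v ++ w))) :
    ∀ w : List α, 0 < P (u ++ w) ↔ 0 < P (v ++ w) := by
  intro w
  induction w using List.reverseRecOn with
  | nil => simpa using ⟨fun _ => hv, fun _ => hu⟩
  | append_singleton ws σ ih =>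
    have hu' : P (u ++ (ws ++ [σ])) = P (u ++ ws) * L (u ++ ws) (some σ) := by
      rw [← List.append_assoc]; exact hPs _ _
    have hv' : P (v ++ (ws ++ [σ])) = P (v ++ ws) * L (v ++ ws) (some σ) := by
      rw [← List.append_assoc]; exact hPs _ _
    rw [hu', hv']
    constructor
    · intro hpos
      have h1 : 0 < P (u ++ ws) := lt_of_le_of_lt (le_refl 0) (by
        by_contra hc
        push_neg at hc
        have := (hL (u ++ ws)).1 (some σ)
        nlinarith)
      have h2 : 0 < L (u ++ ws) (some σ) := by
        by_contra hc
        push_neg at hc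
        nlinarith
      have h1' : 0 < P (v ++ ws) := ih.mp h1
      have hEuv := h ws h1 h1'
      have hset := hsupp _ _ hEuv
      have h2' : 0 < L (v ++ ws) (some σ) := by
        have : some σ ∈ {x : Option α | 0 < L (u ++ ws) x} := h2
        rw [hset] at this
        exact this
      exact mul_pos h1' h2'
    · intro hpos
      have h1' : 0 < P (v ++ ws) := lt_of_le_of_lt (le_refl 0) (by
        by_contra hc
        push_neg at hc
        have := (hL (v ++ ws)).1 (some σ)
        nlinarith)
      have h2' : 0 < L (v ++ ws) (some σ) := by
        by_contra hc
        push_neg at hc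
        nlinarith
      have h1 : 0 < P (u ++ ws) := ih.mpr h1'
      have hEuv := h ws h1 h1'
      have hset := hsupp _ _ hEuv
      have h2 : 0 < L (u ++ ws) (some σ) := by
        have : some σ ∈ {x : Option α | 0 < L (v ++ ws) x} := h2'
        rw [← hset] at this
        exact this
      exact mul_pos h1 h2
end

section
/- Let L : Σ* → Δ(Σ_$) be a language model and E an equivalence relation on Δ(Σ_$) such that supp(ρ) = supp(ρ') whenever ρ =_E ρ'. Then ≡_E is a right congruence: for all u, v ∈ Σ*, if u ≡_E v then for every σ ∈ Σ, uσ ≡_E vσ. -/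
/-- `≡_E` is a right congruence: for all `u, v ∈ Σ*`, if `u ≡_E v`
then for every `σ ∈ Σ`, `uσ ≡_E vσ`. Here `u ≡_E v` iff `(P(u) > 0 ↔ P(v) > 0)` and
`∀ w, P(uw) > 0 → P(vw) > 0 → L(uw) =_E L(vw)`; `E` is an equivalence relation on
distributions preserving supports. (`Σ_$ = Option α`, `none` = `$`.) -/
theorem stmt_4 (α : Type) [Fintype α] [Nonempty α]
    (L : List α → Option α → ℝ)
    (hL : ∀ u, (∀ σ, 0 ≤ L u σ) ∧ (∑ σ : Option α, L u σ) = 1)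
    (P : List α → ℝ)
    (hP0 : P [] = 1)
    (hPs : ∀ u σ, P (u ++ [σ]) = P u * L u (some σ))
    (E : (Option α → ℝ) → (Option α → ℝ) → Prop)
    (hE : Equivalence E)
    (hsupp : ∀ ρ ρ', E ρ ρ' → {σ : Option α | 0 < ρ σ} = {σ : Option α | 0 < ρ' σ}) :
    ∀ u v : List α,
      ((0 < P u ↔ 0 < P v) ∧
        ∀ w : List α, 0 < P (u ++ w) → 0 < P (v ++ w) → E (L (u ++ w)) (L (v ++ w))) →
      ∀ σ : α,
        ((0 < P (u ++ [σ]) ↔ 0 < P (v ++ [σ])) ∧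
          ∀ w : List α, 0 < P (u ++ [σ] ++ w) → 0 < P (v ++ [σ] ++ w) →
            E (L (u ++ [σ] ++ w)) (L (v ++ [σ] ++ w))) := by
  intro u v ⟨hiff, hcong⟩ σ
  -- key: if P(xσ) > 0 then P x > 0 and L x (some σ) > 0
  have key : ∀ x : List α, 0 < P (x ++ [σ]) → 0 < P x ∧ 0 < L x (some σ) := by
    intro x hx
    rw [hPs] at hx
    rcases mul_pos_iff.mp hx with ⟨h1, h2⟩ | ⟨h1, h2⟩
    · exact ⟨h1, h2⟩
    · exact absurd h2 (not_lt.mpr ((hL x).1 (some σ)))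
  have key2 : ∀ x : List α, 0 < P x → 0 < L x (some σ) → 0 < P (x ++ [σ]) := by
    intro x h1 h2; rw [hPs]; exact mul_pos h1 h2
  constructor
  · constructor
    · intro h
      obtain ⟨hpu, hlu⟩ := key u h
      have hpv := hiff.mp hpu
      have hEuv : E (L u) (L v) := by
        have := hcong [] (by simpa using hpu) (by simpa using hpv)
        simpa using this
      have hs := hsupp _ _ hEuv
      have : some σ ∈ {τ : Option α | 0 < L v τ} := hs ▸ hlu
      exact key2 v hpv this
    · intro h
      obtain ⟨hpv, hlv⟩ := key v h
      have hpu := hiff.mpr hpv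
      have hEuv : E (L u) (L v) := by
        have := hcong [] (by simpa using hpu) (by simpa using hpv)
        simpa using this
      have hs := hsupp _ _ hEuv
      have : some σ ∈ {τ : Option α | 0 < L u τ} := hs.symm ▸ hlv
      exact key2 u hpu this
  · intro w h1 h2
    have := hcong ([σ] ++ w) (by simpa [List.append_assoc] using h1)
      (by simpa [List.append_assoc] using h2)
    simpa [List.append_assoc] using this
end

section
/- Let L : Σ* → Δ(Σ_$) be a language model and E an equivalence relation on Δ(Σ_$) such that supp(ρ) = supp(ρ') whenever ρ =_E ρ'. Then the relation ≡_E is an equivalence relation on Σ* (reflexive, symmetric, and transitive). -/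
/-- The relation `≡_E` is an equivalence relation on `Σ*`
(reflexive, symmetric, transitive). Here `u ≡_E v` iff `(P(u) > 0 ↔ P(v) > 0)` and
`∀ w, P(uw) > 0 → P(vw) > 0 → L(uw) =_E L(vw)`; `E` is an equivalence relation on
distributions preserving supports. (`Σ_$ = Option α`, `none` = `$`.) -/
theorem stmt_5 (α : Type) [Fintype α] [Nonempty α]
    (L : List α → Option α → ℝ)
    (hL : ∀ u, (∀ σ, 0 ≤ L u σ) ∧ (∑ σ : Option α, L u σ) = 1)
    (P : List α → ℝ)
    (hP0 : P [] = 1)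
    (hPs : ∀ u σ, P (u ++ [σ]) = P u * L u (some σ))
    (E : (Option α → ℝ) → (Option α → ℝ) → Prop)
    (hE : Equivalence E)
    (hsupp : ∀ ρ ρ', E ρ ρ' → {σ : Option α | 0 < ρ σ} = {σ : Option α | 0 < ρ' σ}) :
    Equivalence (fun u v : List α =>
      (0 < P u ↔ 0 < P v) ∧
        ∀ w : List α, 0 < P (u ++ w) → 0 < P (v ++ w) → E (L (u ++ w)) (L (v ++ w))) := by
  -- key lemma: if u ≡ v then positivity transfers along extensions
  have key : ∀ u v : List α,
      ((0 < P u ↔ 0 < P v) ∧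
        ∀ w : List α, 0 < P (u ++ w) → 0 < P (v ++ w) → E (L (u ++ w)) (L (v ++ w))) →
      ∀ w, 0 < P (u ++ w) → 0 < P (v ++ w) := by
    intro u v ⟨hiff, hw⟩ w
    induction w using List.reverseRecOn with
    | nil => simpa using hiff.mp
    | append_singleton w σ ih =>
      intro h
      rw [← List.append_assoc, hPs] at h
      have hLn : 0 ≤ L (u ++ w) (some σ) := (hL _).1 _
      have hPpos : 0 < P (u ++ w) := by
        by_contra hc
        push_neg at hc
        nlinarith
      have hLpos : 0 < L (u ++ w) (some σ) := by
        rcases lt_or_eq_of_le hLn with h' | h'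
        · exact h'
        · exfalso; rw [← h'] at h; simp at h
      have hvw := ih hPpos
      have hEuv := hw w hPpos hvw
      have := hsupp _ _ hEuv
      have hLv : 0 < L (v ++ w) (some σ) := by
        have : (some σ : Option α) ∈ {σ : Option α | 0 < L (v ++ w) σ} := by
          rw [← this]; exact hLpos
        exact this
      rw [← List.append_assoc, hPs]
      exact mul_pos hvw hLv
  constructor
  · intro u
    exact ⟨Iff.rfl, fun w _ _ => hE.refl _⟩
  · intro u v h
    exact ⟨h.1.symm, fun w hv hu => hE.symm (h.2 w hu hv)⟩
  · intro u v t h1 h2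
    refine ⟨h1.1.trans h2.1, fun w hu ht => ?_⟩
    have hv := key u v h1 w hu
    exact hE.trans (h1.2 w hu hv) (h2.2 w hv ht)
end

section
/- Let L : Σ* → Δ(Σ_$) be a language model and E an equivalence relation on Δ(Σ_$) such that supp(ρ) = supp(ρ') whenever ρ =_E ρ'. Let 0 denote the ≡_E-equivalence class {u ∈ Σ* : P(u) = 0}. Then there exists an injective map φ from the set of ≡_E-equivalence classes of Σ* other than 0 into the set of ≡•_E-equivalence classes of Σ*. -/
/-- `u ≡_E v`: the congruence of the paper coping with null probabilities. -/
def EqvE {α : Type} (L : List α → Option α → ℝ) (P : List α → ℝ)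
    (E : (Option α → ℝ) → (Option α → ℝ) → Prop) (u v : List α) : Prop :=
  (0 < P u ↔ 0 < P v) ∧
    ∀ w : List α, 0 < P (u ++ w) → 0 < P (v ++ w) → E (L (u ++ w)) (L (v ++ w))

/-- `u ≡•_E v`: the congruence of Mayr et al. -/
def EqvB {α : Type} (L : List α → Option α → ℝ)
    (E : (Option α → ℝ) → (Option α → ℝ) → Prop) (u v : List α) : Prop :=
  ∀ w : List α, E (L (u ++ w)) (L (v ++ w))

section Aux

variable {α : Type}
  {L : List α → Option α → ℝ} {P : List α → ℝ}
  {E : (Option α → ℝ) → (Option α → ℝ) → Prop}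

lemma aux_Pzero_append (hPs : ∀ u σ, P (u ++ [σ]) = P u * L u (some σ))
    {u : List α} (hu : P u = 0) : ∀ w, P (u ++ w) = 0 := by
  intro w
  induction w using List.reverseRecOn with
  | nil => simpa using hu
  | append_singleton w σ ih =>
    rw [← List.append_assoc, hPs, ih, zero_mul]

lemma aux_Pnonneg (hLnn : ∀ u σ, 0 ≤ L u σ) (hP0 : P [] = 1)
    (hPs : ∀ u σ, P (u ++ [σ]) = P u * L u (some σ)) (u : List α) : 0 ≤ P u := by
  induction u using List.reverseRecOn with
  | nil => rw [hP0]; norm_num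
  | append_singleton w σ ih => rw [hPs]; exact mul_nonneg ih (hLnn _ _)

lemma aux_Ppos_prefix (hLnn : ∀ u σ, 0 ≤ L u σ) (hP0 : P [] = 1)
    (hPs : ∀ u σ, P (u ++ [σ]) = P u * L u (some σ)) {u w : List α}
    (h : 0 < P (u ++ w)) : 0 < P u := by
  rcases (aux_Pnonneg hLnn hP0 hPs u).lt_or_eq with h' | h'
  · exact h'
  · rw [aux_Pzero_append hPs h'.symm w] at h; exact absurd h (lt_irrefl 0)

/-- Key forward lemma: positivity transfers along `EqvE`-related words. -/
lemma aux_key (hLnn : ∀ u σ, 0 ≤ L u σ) (hP0 : P [] = 1)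
    (hPs : ∀ u σ, P (u ++ [σ]) = P u * L u (some σ))
    (hE : Equivalence E)
    (hsupp : ∀ ρ ρ', E ρ ρ' → {σ : Option α | 0 < ρ σ} = {σ : Option α | 0 < ρ' σ}) :
    ∀ (w u v : List α), 0 < P u → 0 < P v →
      (∀ w, 0 < P (u ++ w) → 0 < P (v ++ w) → E (L (u ++ w)) (L (v ++ w))) →
      0 < P (u ++ w) → 0 < P (v ++ w) := by
  intro w
  induction w with
  | nil => intro u v hu hv _ _; simpa using hv
  | cons σ w ih =>
    intro u v hu hv hEq hpos
    have huσ : 0 < P (u ++ [σ]) := by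
      have : u ++ σ :: w = (u ++ [σ]) ++ w := by simp
      rw [this] at hpos
      exact aux_Ppos_prefix hLnn hP0 hPs hpos
    have hLu : 0 < L u (some σ) := by
      rw [hPs] at huσ
      rcases (hLnn u (some σ)).lt_or_eq with h | h
      · exact h
      · rw [← h, mul_zero] at huσ; exact absurd huσ (lt_irrefl 0)
    have hELuv : E (L u) (L v) := by
      have := hEq [] (by simpa using hu) (by simpa using hv)
      simpa using this
    have hLv : 0 < L v (some σ) := by
      have := hsupp _ _ hELuv
      have : some σ ∈ {σ' : Option α | 0 < L v σ'} := this ▸ hLu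
      exact this
    have hvσ : 0 < P (v ++ [σ]) := by rw [hPs]; exact mul_pos hv hLv
    have hstep : ∀ w', 0 < P ((u ++ [σ]) ++ w') → 0 < P ((v ++ [σ]) ++ w') →
        E (L ((u ++ [σ]) ++ w')) (L ((v ++ [σ]) ++ w')) := by
      intro w' h1 h2
      simp only [List.append_assoc, List.singleton_append] at h1 h2 ⊢
      exact hEq _ h1 h2
    have := ih (u ++ [σ]) (v ++ [σ]) huσ hvσ hstep (by simpa using hpos)
    simpa using this

lemma aux_EqvE_symm (hE : Equivalence E) {u v : List α}
    (h : EqvE L P E u v) : EqvE L P E v u :=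
  ⟨h.1.symm, fun w a b => hE.symm (h.2 w b a)⟩

lemma aux_EqvE_trans (hLnn : ∀ u σ, 0 ≤ L u σ) (hP0 : P [] = 1)
    (hPs : ∀ u σ, P (u ++ [σ]) = P u * L u (some σ))
    (hE : Equivalence E)
    (hsupp : ∀ ρ ρ', E ρ ρ' → {σ : Option α | 0 < ρ σ} = {σ : Option α | 0 < ρ' σ})
    {u v x : List α} (h1 : EqvE L P E u v) (h2 : EqvE L P E v x) :
    EqvE L P E u x := by
  refine ⟨h1.1.trans h2.1, ?_⟩
  intro w hu hx
  have hpu : 0 < P u := aux_Ppos_prefix hLnn hP0 hPs hu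
  have hpv : 0 < P v := h1.1.mp hpu
  have hv : 0 < P (v ++ w) := aux_key hLnn hP0 hPs hE hsupp w u v hpu hpv h1.2 hu
  exact hE.trans (h1.2 w hu hv) (h2.2 w hv hx)

lemma aux_rep_pos (hLnn : ∀ u σ, 0 ≤ L u σ) (hP0 : P [] = 1)
    (hPs : ∀ u σ, P (u ++ [σ]) = P u * L u (some σ))
    {u : List α} (hne : {v | EqvE L P E u v} ≠ {u | P u = 0}) : 0 < P u := by
  rcases (aux_Pnonneg hLnn hP0 hPs u).lt_or_eq with h | h
  · exact h
  exfalso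
  apply hne
  ext v
  simp only [Set.mem_setOf_eq]
  constructor
  · intro hv
    have : ¬ 0 < P v := fun hp => absurd (hv.1.mpr hp) (by rw [← h]; exact lt_irrefl 0)
    rcases (aux_Pnonneg hLnn hP0 hPs v).lt_or_eq with h' | h'
    · exact absurd h' this
    · exact h'.symm
  · intro hv
    refine ⟨by rw [← h, hv], ?_⟩
    intro w hw _
    rw [aux_Pzero_append hPs h.symm w] at hw
    exact absurd hw (lt_irrefl 0)

end Aux

/-- There exists an injective map `φ` from the set of
`≡_E`-equivalence classes of `Σ*` other than the class `0 = {u | P u = 0}`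
into the set of `≡•_E`-equivalence classes of `Σ*`.
(`Σ_$ = Option α`, `none` = `$`; classes are represented as subsets of `Σ*`.) -/
theorem stmt_7 (α : Type) [Fintype α] [Nonempty α]
    (L : List α → Option α → ℝ)
    (hL : ∀ u, (∀ σ, 0 ≤ L u σ) ∧ (∑ σ : Option α, L u σ) = 1)
    (P : List α → ℝ)
    (hP0 : P [] = 1)
    (hPs : ∀ u σ, P (u ++ [σ]) = P u * L u (some σ))
    (E : (Option α → ℝ) → (Option α → ℝ) → Prop)
    (hE : Equivalence E)
    (hsupp : ∀ ρ ρ', E ρ ρ' → {σ : Option α | 0 < ρ σ} = {σ : Option α | 0 < ρ' σ}) :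
    ∃ φ : Set (List α) → Set (List α),
      (∀ C ∈ {C : Set (List α) |
          (∃ u, C = {v | EqvE L P E u v}) ∧ C ≠ {u | P u = 0}},
        φ C ∈ {C : Set (List α) | ∃ u, C = {v | EqvB L E u v}}) ∧
      Set.InjOn φ {C : Set (List α) |
        (∃ u, C = {v | EqvE L P E u v}) ∧ C ≠ {u | P u = 0}} := by
  classical
  have hLnn : ∀ u σ, 0 ≤ L u σ := fun u => (hL u).1
  refine ⟨fun C => if h : ∃ u, C = {v | EqvE L P E u v}
      then {v | EqvB L E h.choose v} else ∅, ?_, ?_⟩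
  · intro C hC
    exact ⟨hC.1.choose, dif_pos hC.1⟩
  · intro C hC C' hC' heq
    simp only [dif_pos hC.1, dif_pos hC'.1] at heq
    set u := hC.1.choose with hu
    set v := hC'.1.choose with hv
    have hCu : C = {x | EqvE L P E u x} := hC.1.choose_spec
    have hCv : C' = {x | EqvE L P E v x} := hC'.1.choose_spec
    have hpu : 0 < P u := aux_rep_pos hLnn hP0 hPs (hCu ▸ hC.2)
    have hpv : 0 < P v := aux_rep_pos hLnn hP0 hPs (hCv ▸ hC'.2)
    -- u is EqvB-related to itself, so by heq, EqvB v u, hence EqvB u v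
    have huu : u ∈ {x | EqvB L E u x} := fun w => hE.refl _
    have hvu : u ∈ {x | EqvB L E v x} := heq ▸ huu
    have huv : EqvB L E u v := fun w => hE.symm (hvu w)
    have hEuv : EqvE L P E u v := ⟨by constructor <;> intro <;> assumption,
      fun w _ _ => huv w⟩
    rw [hCu, hCv]
    ext x
    simp only [Set.mem_setOf_eq]
    constructor
    · intro hx
      exact aux_EqvE_trans hLnn hP0 hPs hE hsupp (aux_EqvE_symm hE hEuv) hx
    · intro hx
      exact aux_EqvE_trans hLnn hP0 hPs hE hsupp hEuv hx
end

section
/- Let L : Σ* → Δ(Σ_$) be a language model and E an equivalence relation on Δ(Σ_$) such that supp(ρ) = supp(ρ') whenever ρ =_E ρ'. If the set of ≡•_E-equivalence classes of Σ* is finite, then the set of ≡_E-equivalence classes of Σ* is finite, and its cardinality is at most the cardinality of the set of ≡•_E-classes plus 1. -/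
/-- If the set of `≡•_E`-equivalence classes of `Σ*` is finite,
then the set of `≡_E`-equivalence classes of `Σ*` is finite, and
`#(classes of ≡_E) ≤ #(classes of ≡•_E) + 1`.
(`Σ_$ = Option α`, `none` = `$`; classes are represented as subsets of `Σ*`.) -/
theorem stmt_8 (α : Type) [Fintype α] [Nonempty α]
    (L : List α → Option α → ℝ)
    (hL : ∀ u, (∀ σ, 0 ≤ L u σ) ∧ (∑ σ : Option α, L u σ) = 1)
    (P : List α → ℝ)
    (hP0 : P [] = 1)
    (hPs : ∀ u σ, P (u ++ [σ]) = P u * L u (some σ))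
    (E : (Option α → ℝ) → (Option α → ℝ) → Prop)
    (hE : Equivalence E)
    (hsupp : ∀ ρ ρ', E ρ ρ' → {σ : Option α | 0 < ρ σ} = {σ : Option α | 0 < ρ' σ})
    (hfin : {C : Set (List α) | ∃ u, C = {v | EqvB L E u v}}.Finite) :
    {C : Set (List α) | ∃ u, C = {v | EqvE L P E u v}}.Finite ∧
    {C : Set (List α) | ∃ u, C = {v | EqvE L P E u v}}.ncard ≤
      {C : Set (List α) | ∃ u, C = {v | EqvB L E u v}}.ncard + 1 := by

  classical
  have hLnn : ∀ u σ, 0 ≤ L u σ := fun u => (hL u).1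
  -- P of an extension positive implies P positive
  have hPz : ∀ w u, 0 < P (u ++ w) → 0 < P u := by
    intro w
    induction w using List.reverseRecOn with
    | nil => intro u h; simpa using h
    | append_singleton w σ ih =>
      intro u h
      rw [← List.append_assoc, hPs] at h
      have hnn := hLnn (u ++ w) (some σ)
      have : 0 < P (u ++ w) := by nlinarith
      exact ih u this
  -- key lemma: positivity of extensions is transferred along EqvE
  have key : ∀ u v, 0 < P u → EqvE L P E u v → ∀ w,
      (0 < P (u ++ w) ↔ 0 < P (v ++ w)) := by
    intro u v hu huv w
    induction w using List.reverseRecOn with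
    | nil => simpa using huv.1
    | append_singleton w σ ih =>
      rw [← List.append_assoc, ← List.append_assoc, hPs, hPs]
      by_cases h : 0 < P (u ++ w)
      · have hv := ih.mp h
        have hEw := huv.2 w h hv
        have hsup := hsupp _ _ hEw
        have hiff : 0 < L (u ++ w) (some σ) ↔ 0 < L (v ++ w) (some σ) := by
          constructor <;> intro hx
          · exact (Set.ext_iff.mp hsup (some σ)).mp hx
          · exact (Set.ext_iff.mp hsup (some σ)).mpr hx
        constructor <;> intro hx
        · have hl : 0 < L (u ++ w) (some σ) := by
            have := hLnn (u ++ w) (some σ); nlinarith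
          exact mul_pos hv (hiff.mp hl)
        · have hl : 0 < L (v ++ w) (some σ) := by
            have := hLnn (v ++ w) (some σ); nlinarith
          exact mul_pos h (hiff.mpr hl)
      · have hv : ¬ 0 < P (v ++ w) := fun hx => h (ih.mpr hx)
        push_neg at h hv
        constructor <;> intro hx
        · have := hLnn (u ++ w) (some σ); nlinarith
        · have := hLnn (v ++ w) (some σ); nlinarith
  have hrefl : ∀ u, EqvE L P E u u := fun u => ⟨Iff.rfl, fun w _ _ => hE.refl _⟩
  have htrans : ∀ u v x, EqvE L P E u v → EqvE L P E v x → EqvE L P E u x := by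
    intro u v x h1 h2
    refine ⟨h1.1.trans h2.1, fun w hu hx => ?_⟩
    have hPu : 0 < P u := hPz w u hu
    have hPv : 0 < P v := h1.1.mp hPu
    have hvw : 0 < P (v ++ w) := (key u v hPu h1 w).mp hu
    exact hE.trans (h1.2 w hu hvw) (h2.2 w hvw hx)
  -- the class of any null-probability string is the set of null-probability strings
  have hzero : ∀ u, ¬ 0 < P u → {v | EqvE L P E u v} = {v | ¬ 0 < P v} := by
    intro u hu
    ext v
    constructor
    · intro h hv; exact hu (h.1.mpr hv)
    · intro hv
      exact ⟨iff_of_false hu hv, fun w huw _ => absurd (hPz w u huw) hu⟩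
  have hposB : ∀ u v, 0 < P u → 0 < P v → EqvB L E u v → EqvE L P E u v :=
    fun u v hu hv h => ⟨iff_of_true hu hv, fun w _ _ => h w⟩
  set g : Set (List α) → Set (List α) :=
    fun C => {v | ∃ u ∈ C, 0 < P u ∧ EqvE L P E u v} with hg
  have hsub : {C : Set (List α) | ∃ u, C = {v | EqvE L P E u v}} ⊆
      (g '' {C : Set (List α) | ∃ u, C = {v | EqvB L E u v}}) ∪
        {{v : List α | ¬ 0 < P v}} := by
    rintro C ⟨u, rfl⟩
    by_cases hu : 0 < P u
    · left
      refine ⟨{v | EqvB L E u v}, ⟨u, rfl⟩, ?_⟩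
      ext v
      simp only [hg, Set.mem_setOf_eq]
      constructor
      · rintro ⟨u', hBu', hu', hu'v⟩
        exact htrans u u' v (hposB u u' hu hu' hBu') hu'v
      · intro h
        exact ⟨u, fun w => hE.refl _, hu, h⟩
    · right
      simp [hzero u hu]
  have hfin2 : ((g '' {C : Set (List α) | ∃ u, C = {v | EqvB L E u v}}) ∪
      {{v : List α | ¬ 0 < P v}}).Finite :=
    (hfin.image g).union (Set.finite_singleton _)
  refine ⟨hfin2.subset hsub, ?_⟩
  calc {C : Set (List α) | ∃ u, C = {v | EqvE L P E u v}}.ncard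
      ≤ ((g '' {C : Set (List α) | ∃ u, C = {v | EqvB L E u v}}) ∪
        {{v : List α | ¬ 0 < P v}}).ncard := Set.ncard_le_ncard hsub hfin2
    _ ≤ (g '' {C : Set (List α) | ∃ u, C = {v | EqvB L E u v}}).ncard +
        ({{v : List α | ¬ 0 < P v}} : Set (Set (List α))).ncard := Set.ncard_union_le _ _
    _ ≤ {C : Set (List α) | ∃ u, C = {v | EqvB L E u v}}.ncard + 1 := by
        have := Set.ncard_image_le (f := g)
          (s := {C : Set (List α) | ∃ u, C = {v | EqvB L E u v}}) hfin
        simp [Set.ncard_singleton]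
        omega
end

section
/- Let L : Σ* → Δ(Σ_$) be a language model and E an equivalence relation on Δ(Σ_$) such that supp(ρ) = supp(ρ') whenever ρ =_E ρ'. Let u, v ∈ Σ* with P(u) > 0 and P(v) > 0. For every w ∈ Σ* with P(uw) > 0, if L(uw) and L(vw) are not E-equivalent, then there exists a prefix w' of w such that L(uw') and L(vw') are not E-equivalent and P(vw') > 0 (and also P(uw') > 0, since w' is a prefix of w). -/
/-- Let `u, v ∈ Σ*` with `P(u) > 0` and `P(v) > 0`. For every
`w ∈ Σ*` with `P(uw) > 0`, if `L(uw)` and `L(vw)` are not `E`-equivalent, then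
there exists a prefix `w'` of `w` (i.e. `w = w' ++ z`) such that `L(uw')` and
`L(vw')` are not `E`-equivalent, `P(vw') > 0`, and also `P(uw') > 0`.
`E` is an equivalence relation on distributions preserving supports.
(`Σ_$ = Option α`, `none` = `$`.) -/
theorem stmt_9 (α : Type) [Fintype α] [Nonempty α]
    (L : List α → Option α → ℝ)
    (hL : ∀ u, (∀ σ, 0 ≤ L u σ) ∧ (∑ σ : Option α, L u σ) = 1)
    (P : List α → ℝ)
    (hP0 : P [] = 1)
    (hPs : ∀ u σ, P (u ++ [σ]) = P u * L u (some σ))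
    (E : (Option α → ℝ) → (Option α → ℝ) → Prop)
    (hE : Equivalence E)
    (hsupp : ∀ ρ ρ', E ρ ρ' → {σ : Option α | 0 < ρ σ} = {σ : Option α | 0 < ρ' σ})
    (u v : List α)
    (hu : 0 < P u) (hv : 0 < P v)
    (w : List α)
    (hw : 0 < P (u ++ w))
    (hne : ¬ E (L (u ++ w)) (L (v ++ w))) :
    ∃ w' z : List α, w = w' ++ z ∧
      ¬ E (L (u ++ w')) (L (v ++ w')) ∧
      0 < P (v ++ w') ∧ 0 < P (u ++ w') := by
  -- Positivity of P propagates to prefixes.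
  have hpre : ∀ (x : List α) (y : List α), 0 < P (x ++ y) → 0 < P x := by
    intro x y
    induction y using List.reverseRecOn with
    | nil => simp
    | append_singleton y σ ih =>
      intro h
      apply ih
      rw [← List.append_assoc, hPs] at h
      by_contra hxy
      push_neg at hxy
      have : P (x ++ y) * L (x ++ y) (some σ) ≤ 0 :=
        mul_nonpos_of_nonpos_of_nonneg hxy ((hL (x ++ y)).1 _)
      linarith
  -- Key lemma: if P(u++w)>0 but not P(v++w)>0, we find a proper prefix.
  have key : ∀ (w : List α), 0 < P (u ++ w) → ¬ (0 < P (v ++ w)) →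
      ∃ w' z : List α, w = w' ++ z ∧
        ¬ E (L (u ++ w')) (L (v ++ w')) ∧
        0 < P (v ++ w') ∧ 0 < P (u ++ w') := by
    intro w
    induction w using List.reverseRecOn with
    | nil => intro _ hbad; simp at hbad; exact absurd hv hbad.not_gt
    | append_singleton y σ ih =>
      intro hwu hwv
      by_cases hvy : 0 < P (v ++ y)
      · -- the step from y to y++[σ] killed P(v++·): supports differ at y.
        have huy : 0 < P (u ++ y) := hpre (u ++ y) [σ] (by rw [← List.append_assoc] at hwu; exact hwu)
        refine ⟨y, [σ], rfl, ?_, hvy, huy⟩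
        rw [← List.append_assoc, hPs] at hwu
        rw [← List.append_assoc, hPs] at hwv
        have hLu : 0 < L (u ++ y) (some σ) := by
          rcases lt_or_eq_of_le ((hL (u ++ y)).1 (some σ)) with h | h
          · exact h
          · rw [← h] at hwu; simp at hwu
        have hLv : L (v ++ y) (some σ) = 0 := by
          rcases lt_or_eq_of_le ((hL (v ++ y)).1 (some σ)) with h | h
          · exact absurd (mul_pos hvy h) hwv
          · exact h.symm
        intro hEq
        have := hsupp _ _ hEq
        have hmem : (some σ) ∈ {σ' : Option α | 0 < L (u ++ y) σ'} := hLu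
        rw [this] at hmem
        simp only [Set.mem_setOf_eq, hLv] at hmem
        exact lt_irrefl 0 hmem
      · -- recurse
        obtain ⟨w', z, hz, h1, h2, h3⟩ :=
          ih (hpre (u ++ y) [σ] (by rw [← List.append_assoc] at hwu; exact hwu)) hvy
        exact ⟨w', z ++ [σ], by rw [hz, List.append_assoc], h1, h2, h3⟩
  by_cases hvw : 0 < P (v ++ w)
  · exact ⟨w, [], by simp, hne, hvw, hw⟩
  · exact key w hw hvw
end

section
/- Let A = (Q, q_in, π, τ) be a PDFA over Σ, let L be the language model it defines, and let E be an equivalence relation on Δ(Σ_$) such that supp(ρ) = supp(ρ') whenever ρ =_E ρ'. Then the relation ≡_E on Σ* has at most |Q| + 1 equivalence classes. -/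
/-- Let `A = (Q, q_in, π, τ)` be a PDFA over `Σ`, `L` the
language model it defines (`L(u) = π(τ*(q_in, u))`, `τ*(q, w) = w.foldl τ q`),
and `E` a support-preserving equivalence relation on `Δ(Σ_$)`. Then `≡_E` has at
most `|Q| + 1` equivalence classes. (`Σ_$ = Option α`, `none` = `$`; `P` is the
prefix probability of `L`.) -/
theorem stmt_11 (α : Type) (Q : Type) [Fintype α] [Nonempty α] [Fintype Q]
    (qin : Q)
    (pi : Q → Option α → ℝ)
    (hpi : ∀ q, (∀ σ, 0 ≤ pi q σ) ∧ (∑ σ : Option α, pi q σ) = 1)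
    (τ : Q → α → Q)
    (L : List α → Option α → ℝ)
    (hLdef : ∀ u : List α, L u = pi (u.foldl τ qin))
    (P : List α → ℝ)
    (hP0 : P [] = 1)
    (hPs : ∀ u σ, P (u ++ [σ]) = P u * L u (some σ))
    (E : (Option α → ℝ) → (Option α → ℝ) → Prop)
    (hE : Equivalence E)
    (hsupp : ∀ ρ ρ', E ρ ρ' → {σ : Option α | 0 < ρ σ} = {σ : Option α | 0 < ρ' σ}) :
    {C : Set (List α) | ∃ u, C = {v | EqvE L P E u v}}.Finite ∧
    {C : Set (List α) | ∃ u, C = {v | EqvE L P E u v}}.ncard ≤ Fintype.card Q + 1 := by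
  classical
  have hLnn : ∀ u σ, 0 ≤ L u σ := fun u σ => by rw [hLdef]; exact (hpi _).1 σ
  have Pnn : ∀ u, 0 ≤ P u := by
    intro u
    induction u using List.reverseRecOn with
    | nil => rw [hP0]; norm_num
    | append_singleton u σ ih => rw [hPs]; exact mul_nonneg ih (hLnn u _)
  have Pzero : ∀ u, P u = 0 → ∀ w, P (u ++ w) = 0 := by
    intro u hu w
    induction w using List.reverseRecOn with
    | nil => simpa using hu
    | append_singleton w σ ih => rw [← List.append_assoc, hPs, ih, zero_mul]
  have Lcongr : ∀ u v, u.foldl τ qin = v.foldl τ qin → ∀ w, L (u ++ w) = L (v ++ w) := by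
    intro u v h w
    rw [hLdef, hLdef, List.foldl_append, List.foldl_append, h]
  have key : ∀ a b : ℝ, 0 ≤ a → 0 ≤ b → (0 < a * b ↔ 0 < a ∧ 0 < b) := by
    intro a b ha hb
    rw [mul_pos_iff]
    constructor
    · rintro (⟨h1, h2⟩ | ⟨h1, h2⟩)
      · exact ⟨h1, h2⟩
      · linarith
    · tauto
  have Ptrans : ∀ u v, u.foldl τ qin = v.foldl τ qin → 0 < P u → 0 < P v →
      ∀ w, (0 < P (u ++ w) ↔ 0 < P (v ++ w)) := by
    intro u v h hu hv w
    induction w using List.reverseRecOn with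
    | nil => simp [hu, hv]
    | append_singleton w σ ih =>
      rw [← List.append_assoc, ← List.append_assoc, hPs, hPs, Lcongr u v h w,
        key _ _ (Pnn _) (hLnn _ _), key _ _ (Pnn _) (hLnn _ _), ih]
  have sub : ∀ u v, 0 < P u → 0 < P v → u.foldl τ qin = v.foldl τ qin →
      {w | EqvE L P E u w} ⊆ {w | EqvE L P E v w} := by
    intro u v hu hv hst w hw
    obtain ⟨h1, h2⟩ := hw
    refine ⟨(iff_of_true hv hu).trans h1, fun w' hvw hww => ?_⟩
    rw [Lcongr v u hst.symm w']
    exact h2 w' ((Ptrans u v hst hu hv w').2 hvw) hww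
  have zchar : ∀ u, ¬ 0 < P u → ∀ w, (EqvE L P E u w ↔ ¬ 0 < P w) := by
    intro u hu w
    have hu0 : P u = 0 := le_antisymm (not_lt.1 hu) (Pnn u)
    constructor
    · rintro ⟨h1, _⟩ hw; exact hu (h1.mpr hw)
    · intro hw
      exact ⟨iff_of_false hu hw,
        fun w' hp _ => absurd hp (by rw [Pzero u hu0 w']; exact lt_irrefl 0)⟩
  set f : List α → Option Q := fun u => if 0 < P u then some (u.foldl τ qin) else none with hf
  have classEq : ∀ u v, f u = f v → {w | EqvE L P E u w} = {w | EqvE L P E v w} := by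
    intro u v hfv
    by_cases hu : 0 < P u
    · have hv : 0 < P v := by
        by_contra h; simp only [hf, if_pos hu, if_neg h] at hfv; exact Option.some_ne_none _ hfv
      have hst : u.foldl τ qin = v.foldl τ qin := by
        simp only [hf, if_pos hu, if_pos hv, Option.some.injEq] at hfv; exact hfv
      exact Set.Subset.antisymm (sub u v hu hv hst) (sub v u hv hu hst.symm)
    · have hv : ¬ 0 < P v := by
        by_contra h; simp only [hf, if_pos h, if_neg hu] at hfv; exact Option.some_ne_none _ hfv.symm
      ext w
      rw [Set.mem_setOf_eq, Set.mem_setOf_eq, zchar u hu w, zchar v hv w]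
  set g : Option Q → Set (List α) := fun oq =>
    if hx : ∃ u, f u = oq then {w | EqvE L P E hx.choose w} else ∅ with hg
  have hsub : {C : Set (List α) | ∃ u, C = {v | EqvE L P E u v}} ⊆ Set.range g := by
    rintro C ⟨u, rfl⟩
    refine ⟨f u, ?_⟩
    have hx : ∃ v, f v = f u := ⟨u, rfl⟩
    rw [hg]
    simp only [dif_pos hx]
    exact classEq hx.choose u hx.choose_spec
  have hfin : (Set.range g).Finite := Set.finite_range g
  refine ⟨hfin.subset hsub, ?_⟩
  calc {C : Set (List α) | ∃ u, C = {v | EqvE L P E u v}}.ncard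
      ≤ (Set.range g).ncard := Set.ncard_le_ncard hsub hfin
    _ = (g '' Set.univ).ncard := by rw [Set.image_univ]
    _ ≤ (Set.univ : Set (Option Q)).ncard := Set.ncard_image_le Set.finite_univ
    _ = Fintype.card (Option Q) := by rw [Set.ncard_univ, Nat.card_eq_fintype_card]
    _ = Fintype.card Q + 1 := Fintype.card_option
end

section
/- Let L : Σ* → Δ(Σ_$) be a language model and let μ be the unique probability measure on (Σ_$)^ℕ (product σ-algebra) satisfying μ{x : x_1 ⋯ x_k = w} = P_k(w) for every k ≥ 1 and w ∈ (Σ_$)^k. Then μ{x ∈ (Σ_$)^ℕ : there exists k ≥ 1 with x_k = $} = ∑_{w ∈ Σ*} P_$(w). Consequently, ∑_{w ∈ Σ*} P_$(w) = 1 if and only if μ{x : x_k ∈ Σ for all k ≥ 1} = 0, i.e. iff a string sampled from μ is finite with probability 1. -/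
open MeasureTheory

/-- `Σ_$ = Option α` (with `none` = `$`) carries the discrete σ-algebra. -/
instance optionDiscreteMeasurableSpace (α : Type) : MeasurableSpace (Option α) := ⊤

/-- `L_$`: the extension of the language model `L` to strings over `Σ_$`,
sending any string containing `$` to the point mass `δ_$` at `$`. -/
noncomputable def Lext {α : Type} [Fintype α] [DecidableEq α]
    (L : List α → Option α → ℝ) (w : List (Option α)) : Option α → ℝ :=
  if none ∈ w then fun σ => if σ = none then 1 else 0
  else L w.reduceOption

/-- `P_k(w) = ∏_{i=1}^{k} L_$(w_{<i})(w_i)` for `w ∈ (Σ_$)^k`. -/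
noncomputable def Pk {α : Type} [Fintype α] [DecidableEq α]
    (L : List α → Option α → ℝ) (w : List (Option α)) : ℝ :=
  ∏ i ∈ Finset.range w.length, Lext L (w.take i) (w.getD i none)

lemma reduceOption_map_some' {α : Type} (u : List α) : (u.map some).reduceOption = u := by
  induction u with
  | nil => rfl
  | cons a t ih => simp [ih]

lemma Lext_map_some {α : Type} [Fintype α] [DecidableEq α]
    (L : List α → Option α → ℝ) (u : List α) :
    Lext L (u.map some) = L u := by
  have : none ∉ u.map some := by simp
  simp [Lext, this, reduceOption_map_some']

lemma Pk_append {α : Type} [Fintype α] [DecidableEq α]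
    (L : List α → Option α → ℝ) (v : List (Option α)) (σ : Option α) :
    Pk L (v ++ [σ]) = Pk L v * Lext L v σ := by
  unfold Pk
  rw [List.length_append, List.length_singleton, Finset.prod_range_succ]
  congr 1
  · apply Finset.prod_congr rfl
    intro i hi
    rw [Finset.mem_range] at hi
    rw [List.take_append_of_le_length (le_of_lt hi), List.getD_append _ _ _ _ hi]
  · rw [List.take_append_of_le_length le_rfl, List.take_length,
      List.getD_append_right _ _ _ _ le_rfl, Nat.sub_self]
    rfl

/-- Let `μ` be the (unique) probability measure on `(Σ_$)^ℕ`
(product σ-algebra) whose cylinder probabilities are given by `P_k`. Then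
`μ{x | ∃ k, x_k = $} = ∑_{w ∈ Σ*} P_$(w)` where `P_$(w) = P(w)·L(w)($)`.
Consequently, `∑_{w ∈ Σ*} P_$(w) = 1` iff `μ{x | ∀ k, x_k ∈ Σ} = 0`, i.e. iff a
string sampled from `μ` is finite with probability 1. (0-indexed sequences.) -/
theorem stmt_15 (α : Type) [Fintype α] [DecidableEq α] [Nonempty α]
    (L : List α → Option α → ℝ)
    (hL : ∀ u, (∀ σ, 0 ≤ L u σ) ∧ (∑ σ : Option α, L u σ) = 1)
    (P : List α → ℝ)
    (hP0 : P [] = 1)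
    (hPs : ∀ u σ, P (u ++ [σ]) = P u * L u (some σ))
    (μ : Measure (ℕ → Option α))
    (hμ : IsProbabilityMeasure μ)
    (hcyl : ∀ w : List (Option α), 1 ≤ w.length →
      μ {x | ∀ i, i < w.length → x i = w.getD i none} = ENNReal.ofReal (Pk L w)) :
    (μ {x | ∃ k, x k = none} = ∑' w : List α, ENNReal.ofReal (P w * L w none)) ∧
    ((∑' w : List α, ENNReal.ofReal (P w * L w none)) = 1 ↔
      μ {x | ∀ k, x k ≠ none} = 0) := by
  classical
  set f : List α → Set (ℕ → Option α) :=
    fun w => {x | ∀ i, i < w.length + 1 → x i = (w.map some ++ [none]).getD i none} with hf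
  -- basic facts about membership in f w
  have hfnone : ∀ (w : List α) (x : ℕ → Option α), x ∈ f w → x w.length = none := by
    intro w x hx
    have h := hx w.length (by omega)
    rwa [List.getD_append_right _ _ _ _ (by simp), List.length_map, Nat.sub_self] at h
  have hfsome : ∀ (w : List α) (x : ℕ → Option α), x ∈ f w →
      ∀ i (h : i < w.length), x i = some (w[i]'h) := by
    intro w x hx i h
    have hx' := hx i (by omega)
    rwa [List.getD_append _ _ _ _ (by simpa using h),
      List.getD_eq_getElem _ _ (by simpa using h), List.getElem_map] at hx'
  -- measurability
  have hmeas : ∀ w : List α, MeasurableSet (f w) := by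
    intro w
    have : f w = ⋂ i ∈ Finset.range (w.length + 1),
        (fun x : ℕ → Option α => x i) ⁻¹' {(w.map some ++ [none]).getD i none} := by
      ext x
      simp [hf, Set.mem_iInter]
    rw [this]
    exact MeasurableSet.biInter (Finset.range _).countable_toSet
      (fun i _ => measurable_pi_apply i MeasurableSpace.measurableSet_top)
  -- measure of each piece
  have hPmap : ∀ w : List α, Pk L (w.map some) = P w := by
    intro w
    induction w using List.reverseRecOn with
    | nil => simp [Pk, hP0]
    | append_singleton u σ ih =>
        rw [List.map_append, List.map_singleton, Pk_append, Lext_map_some, ih, hPs]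
  have hμf : ∀ w : List α, μ (f w) = ENNReal.ofReal (P w * L w none) := by
    intro w
    have h1 : μ (f w) = ENNReal.ofReal (Pk L (w.map some ++ [none])) := by
      rw [← hcyl (w.map some ++ [none]) (by simp)]
      congr 1
      ext x
      simp only [hf, Set.mem_setOf_eq, List.length_append, List.length_map,
        List.length_singleton]
    rw [h1, Pk_append, Lext_map_some, hPmap]
  -- disjointness
  have hdisj : Pairwise (Function.onFun Disjoint f) := by
    intro w w' hne
    rw [Function.onFun, Set.disjoint_left]
    intro x hx hx'
    apply hne
    have hlen : w.length = w'.length := by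
      by_contra hll
      rcases Nat.lt_or_ge w.length w'.length with h | h
      · have := hfsome w' x hx' w.length h
        rw [hfnone w x hx] at this
        exact Option.some_ne_none _ this.symm
      · have h' : w'.length < w.length := lt_of_le_of_ne h (Ne.symm hll)
        have := hfsome w x hx w'.length h'
        rw [hfnone w' x hx'] at this
        exact Option.some_ne_none _ this.symm
    apply List.ext_getElem hlen
    intro i h1 h2
    have e1 := hfsome w x hx i h1
    have e2 := hfsome w' x hx' i h2
    rw [e1] at e2
    exact Option.some_inj.mp e2
  -- the union
  have hunion : (⋃ w : List α, f w) = {x : ℕ → Option α | ∃ k, x k = none} := by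
    ext x
    constructor
    · intro hx
      rcases Set.mem_iUnion.mp hx with ⟨w, hw⟩
      exact ⟨w.length, hfnone w x hw⟩
    · rintro ⟨k0, hk0⟩
      have hex : ∃ k, x k = none := ⟨k0, hk0⟩
      have hxk : x (Nat.find hex) = none := Nat.find_spec hex
      have hlt : ∀ i < Nat.find hex, x i ≠ none := fun i hi => Nat.find_min hex hi
      refine Set.mem_iUnion.2
        ⟨List.ofFn (fun i : Fin (Nat.find hex) => (x i).getD (Classical.arbitrary α)), ?_⟩
      intro i hi
      rw [List.length_ofFn] at hi
      rcases Nat.lt_or_ge i (Nat.find hex) with h | h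
      · rw [List.getD_append _ _ _ _ (by simpa using h),
          List.getD_eq_getElem _ _ (by simpa using h)]
        simp only [List.getElem_map, List.getElem_ofFn]
        cases hxi : x i with
        | none => exact absurd hxi (hlt i h)
        | some a => simp [hxi]
      · have hik : i = Nat.find hex := by omega
        subst hik
        rw [List.getD_append_right _ _ _ _ (by simp), hxk]
        simp
  -- main identity
  have key : μ {x : ℕ → Option α | ∃ k, x k = none}
      = ∑' w : List α, ENNReal.ofReal (P w * L w none) := by
    rw [← hunion, measure_iUnion hdisj hmeas]
    exact tsum_congr hμf
  refine ⟨key, ?_⟩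
  have hcompl : {x : ℕ → Option α | ∀ k, x k ≠ none}
      = {x : ℕ → Option α | ∃ k, x k = none}ᶜ := by
    ext x; simp
  have hmeasU : MeasurableSet {x : ℕ → Option α | ∃ k, x k = none} := by
    rw [← hunion]; exact MeasurableSet.iUnion hmeas
  have hle : (∑' w : List α, ENNReal.ofReal (P w * L w none)) ≤ 1 := key ▸ prob_le_one
  rw [hcompl, measure_compl hmeasU (measure_ne_top μ _), measure_univ, key,
    tsub_eq_zero_iff_le]
  exact ⟨fun h => h.ge, fun h => le_antisymm hle h⟩
end
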